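/- The cube of the infinite product ∏_{i≥1}(1-q^i) satisfies (∏_{i≥1}(1-q^i))^3 ≡ Σ_{n≥0} q^{n(n+1)/2} (mod 2); that is, the coefficient of q^N in the cube is odd if and only if N is a triangular number. -/

import Mathlib

/-- `f j = ∏_{i≥1} (1 - q^{j i})` as a formal power series over ℤ (coefficients
computed from a sufficiently long finite truncation of the product). -/
noncomputable def f (j : ℕ) : PowerSeries ℤ :=
  PowerSeries.mk fun N =>
    PowerSeries.coeff (R := ℤ) N (∏ i ∈ Finset.range (N + 1),
      (1 - (PowerSeries.X : PowerSeries ℤ) ^ (j * (i + 1))))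

/-- The multiplicative inverse of `f j` (its constant coefficient is `1`). -/
noncomputable def fInv (j : ℕ) : PowerSeries ℤ := PowerSeries.invOfUnit (f j) 1

/-- Coefficientwise congruence mod 2 of integer power series. -/
def modEq2 (F G : PowerSeries ℤ) : Prop :=
  ∀ n : ℕ, (PowerSeries.coeff (R := ℤ) n F) ≡ (PowerSeries.coeff (R := ℤ) n G) [ZMOD 2]

/-- `b m n` : the number of m-regular partitions of n (no part divisible by m). -/
noncomputable def b (m n : ℕ) : ℤ :=
  (Nat.card {p : n.Partition // ∀ x ∈ p.parts, ¬ m ∣ x} : ℤ)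


namespace CubeAux
open PowerSeries Finset
noncomputable section

local notation "ZX" => PowerSeries ℤ

/-- s j = 0 + 1 + ... + (j-1) = T_{j-1} -/
def s : ℕ → ℕ
  | 0 => 0
  | j+1 => s j + j

lemma two_s (k : ℕ) : 2 * s (k+1) = (k+1) * k := by
  induction k with
  | zero => simp [s]
  | succ k ih =>
    show 2 * (s (k+1) + (k+1)) = _
    rw [Nat.mul_add, ih]; ring

lemma le_s (k : ℕ) : k ≤ s (k+1) := by
  induction k with
  | zero => simp [s]
  | succ k ih => show _ ≤ s (k+1) + (k+1); omega

lemma s_strictMono {a b : ℕ} (h : a < b) : s (a+1) < s (b+1) := by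
  induction b with
  | zero => omega
  | succ b ih =>
    rcases Nat.lt_succ_iff_lt_or_eq.mp h with h' | h'
    · exact lt_trans (ih h') (by show s (b+1) < s (b+1) + (b+1); omega)
    · subst h'; show s (a+1) < s (a+1) + (a+1); omega

def inv1 (m : ℕ) : ZX := PowerSeries.invOfUnit (1 - X^(m+1)) 1

lemma inv1_spec (m : ℕ) : (1 - X^(m+1)) * inv1 m = 1 :=
  PowerSeries.mul_invOfUnit _ 1 (by simp)

def U (j : ℕ) : ZX := ∏ i ∈ range j, (1 - X^(i+1))
def V (j : ℕ) : ZX := ∏ i ∈ range j, inv1 i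

lemma UV (j : ℕ) : U j * V j = 1 := by
  induction j with
  | zero => simp [U, V]
  | succ j ih =>
    rw [U, V, prod_range_succ, prod_range_succ]
    calc (∏ i ∈ range j, (1 - X^(i+1))) * (1 - X^(j+1)) *
          ((∏ i ∈ range j, inv1 i) * inv1 j)
        = (U j * V j) * ((1 - X^(j+1)) * inv1 j) := by rw [U, V]; ring
      _ = 1 := by rw [ih, inv1_spec, one_mul]

lemma V_succ_mul (j : ℕ) : V (j+1) * (1 - X^(j+1)) = V j := by
  rw [V, prod_range_succ, ← V]
  calc V j * inv1 j * (1 - X^(j+1)) = V j * ((1 - X^(j+1)) * inv1 j) := by ring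
    _ = V j := by rw [inv1_spec, mul_one]

def Num (n j : ℕ) : ZX := ∏ i ∈ range j, (1 - X^(n - i))

def c (n j : ℕ) : ZX := X^(s j) * (Num n j * V j)

lemma c_zero (n : ℕ) : c n 0 = 1 := by simp [c, s, Num, V]

lemma Num_eq_U (n : ℕ) : Num n n = U n := by
  rw [Num, U, ← Finset.prod_range_reflect (fun i => (1 - (X:ZX)^(i+1))) n]
  exact Finset.prod_congr rfl (fun i hi => by
    have hi' := Finset.mem_range.mp hi
    have : n - i = n - 1 - i + 1 := by omega
    rw [this])

lemma c_diag (n : ℕ) : c (n+1) (n+1) = X^n * c n n := by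
  rw [c, c, Num_eq_U, Num_eq_U, UV, UV, mul_one, mul_one, ← pow_add]
  have : s (n+1) = n + s n := by show s n + n = n + s n; omega
  rw [this]

lemma pascal {n j : ℕ} (h : j < n) : c (n+1) (j+1) = c n (j+1) + X^n * c n j := by
  have hNum1 : Num (n+1) (j+1) = Num n j * (1 - X^(n+1)) := by
    rw [Num, Finset.prod_range_succ']
    have h0 : n + 1 - 0 = n + 1 := rfl
    rw [h0, Num]
    congr 1
    exact Finset.prod_congr rfl (fun i hi => by
      have : n + 1 - (i+1) = n - i := by omega
      rw [this])
  have hNum2 : Num n (j+1) = Num n j * (1 - X^(n-j)) := by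
    rw [Num, Finset.prod_range_succ, ← Num]
  have hV : V j = V (j+1) * (1 - X^(j+1)) := (V_succ_mul j).symm
  rw [c, c, c, hNum1, hNum2, hV]
  have hpow : (X:ZX)^n * X^(s j) = X^(s (j+1)) * X^(n-j) := by
    rw [← pow_add, ← pow_add]
    congr 1
    show n + s j = (s j + j) + (n - j)
    omega
  have hkey : ((X:ZX)^(n-j)) * X^(j+1) = X^(n+1) := by
    rw [← pow_add]; congr 1; omega
  calc X^(s (j+1)) * (Num n j * (1 - X^(n+1)) * V (j+1))
      = X^(s (j+1)) * (Num n j * (1 - X^(n-j)) * V (j+1)) +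
        (X^(s (j+1)) * X^(n-j)) * (Num n j * V (j+1)) -
        (X^(s (j+1)) * (X^(n-j) * X^(j+1))) * (Num n j * V (j+1)) := by
        rw [hkey]; ring
    _ = X^(s (j+1)) * (Num n j * (1 - X^(n-j)) * V (j+1)) +
        (X^n * X^(s j)) * (Num n j * V (j+1)) -
        (X^n * X^(s j) * X^(j+1)) * (Num n j * V (j+1)) := by
        rw [hpow]; ring
    _ = X^(s (j+1)) * (Num n j * (1 - X^(n-j)) * V (j+1)) +
        X^n * (X^(s j) * (Num n j * (V (j+1) * (1 - X^(j+1))))) := by ring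
    _ = _ := by rw [V_succ_mul]

/-- The q-binomial theorem over ℤ[[X]]. -/
lemma qbt (x y : ZX) (n : ℕ) :
    ∏ i ∈ range n, (x + X^i * y) = ∑ j ∈ range (n+1), c n j * x^(n-j) * y^j := by
  induction n with
  | zero => simp [c_zero]
  | succ n ih =>
    rw [prod_range_succ, ih, mul_add]
    have e1 : (∑ j ∈ range (n+1), c n j * x^(n-j) * y^j) * x
        = (∑ j ∈ range n, c n (j+1) * x^(n-j) * y^(j+1)) + x^(n+1) := by
      rw [Finset.sum_mul, Finset.sum_range_succ' (fun j => (c n j * x^(n-j) * y^j) * x) n]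
      congr 1
      · exact Finset.sum_congr rfl (fun j hj => by
          have hj' := Finset.mem_range.mp hj
          have : n - j = (n - (j+1)) + 1 := by omega
          rw [this, pow_succ]; ring)
      · rw [c_zero, Nat.sub_zero]; ring
    have e2 : (∑ j ∈ range (n+1), c n j * x^(n-j) * y^j) * (X^n * y)
        = (∑ j ∈ range n, (X^n * c n j) * x^(n-j) * y^(j+1)) +
          X^n * c n n * y^(n+1) := by
      rw [Finset.sum_mul, Finset.sum_range_succ (fun j => (c n j * x^(n-j) * y^j) * (X^n * y)) n]
      congr 1
      · exact Finset.sum_congr rfl (fun j hj => by ring)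
      · simp; ring
    rw [e1, e2]
    -- RHS
    rw [Finset.sum_range_succ' (fun j => c (n+1) j * x^(n+1-j) * y^j) (n+1)]
    rw [Finset.sum_range_succ (fun j => c (n+1) (j+1) * x^(n+1-(j+1)) * y^(j+1)) n]
    rw [c_zero, c_diag]
    have e4 : ∀ j ∈ range n, c (n+1) (j+1) * x^(n+1-(j+1)) * y^(j+1)
        = c n (j+1) * x^(n-j) * y^(j+1) + (X^n * c n j) * x^(n-j) * y^(j+1) := by
      intro j hj
      have hj' := Finset.mem_range.mp hj
      rw [pascal (by omega : j < n)]
      have : n + 1 - (j+1) = n - j := by omega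
      rw [this]; ring
    rw [Finset.sum_congr rfl e4, Finset.sum_add_distrib]
    have : n + 1 - (n+1) = 0 := by omega
    rw [this]
    simp only [Nat.sub_zero, pow_zero, one_mul, mul_one]
    ring
-- part2 additions, appended to part1
def Up (j : ℕ) : ZX := ∏ i ∈ range j, (1 + X^(i+1))

def bq (n j : ℕ) : ZX := Num n j * V j

lemma s_sum (j : ℕ) : s j = ∑ i ∈ range j, i := by
  induction j with
  | zero => simp [s]
  | succ j ih => rw [Finset.sum_range_succ, ← ih]; rfl

lemma expo1 {m k : ℕ} (hk : k ≤ m) :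
    s (m-k+1) + (m+1)*(m+1+k) = s (m+1) + (m+1)*(m+1) + s (k+1) := by
  have h1 := two_s (m-k)
  have h2 := two_s m
  have h3 := two_s k
  zify [hk] at h1 h2 h3 ⊢
  have hG : 2 * ((s (m-k+1) : ℤ) + (m+1)*(m+1+k)) =
      2 * ((s (m+1) : ℤ) + (m+1)*(m+1) + (s (k+1) : ℤ)) := by
    linear_combination h1 - h2 - h3
  linarith

lemma expo2 {m k : ℕ} (hk : k ≤ m) :
    s (m+2+k) + (m+1)*(m-k) = s (m+1) + (m+1)*(m+1) + s (k+1) := by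
  have h1 := two_s (m+1+k)
  rw [show m+1+k+1 = m+2+k by omega] at h1
  have h2 := two_s m
  have h3 := two_s k
  zify [hk] at h1 h2 h3 ⊢
  have hG : 2 * ((s (m+2+k) : ℤ) + (m+1)*(m-k : ℕ)) =
      2 * ((s (m+1) : ℤ) + (m+1)*(m+1) + (s (k+1) : ℤ)) := by
    push_cast [hk]
    linear_combination h1 - h2 - h3
  linarith

lemma expo3 (m : ℕ) :
    (m+1)*(2*(m+1)) = s (m+1) + (m+1)*(m+1) + s (m+2) := by
  have h2 := two_s m
  have h4 := two_s (m+1)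
  zify at h2 h4 ⊢
  have hG : 2 * (((m:ℤ)+1)*(2*(m+1))) =
      2 * ((s (m+1) : ℤ) + (m+1)*(m+1) + (s (m+2) : ℤ)) := by
    linear_combination - h2 - h4
  linarith

lemma prodL (m : ℕ) :
    ∏ i ∈ range (2*(m+1)), ((X:ZX)^(m+1) + X^i * 1) =
    X^(s (m+1) + (m+1)*(m+1)) * (2 * ((1 + X^(m+1)) * (Up m)^2)) := by
  have hsplit : 2*(m+1) = (m+1) + (m+1) := by ring
  rw [hsplit, Finset.prod_range_add]
  have P1 : ∏ i ∈ range (m+1), ((X:ZX)^(m+1) + X^i * 1) =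
      X^(s (m+1)) * (Up m * (1 + X^(m+1))) := by
    have hterm : ∀ i ∈ range (m+1), ((X:ZX)^(m+1) + X^i * 1) =
        X^i * (1 + X^(m+1-i)) := by
      intro i hi
      have hi' := Finset.mem_range.mp hi
      have hx : (X:ZX)^i * X^(m+1-i) = X^(m+1) := by
        rw [← pow_add]; congr 1; omega
      rw [mul_add, mul_one, hx, add_comm]
    rw [Finset.prod_congr rfl hterm, Finset.prod_mul_distrib,
      Finset.prod_pow_eq_pow_sum, ← s_sum]
    congr 1
    have hrefl : ∏ i ∈ range (m+1), (1 + (X:ZX)^(m+1-i)) =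
        ∏ i ∈ range (m+1), (1 + (X:ZX)^(i+1)) := by
      rw [← Finset.prod_range_reflect (fun i => (1 + (X:ZX)^(i+1))) (m+1)]
      exact Finset.prod_congr rfl (fun i hi => by
        have hi' := Finset.mem_range.mp hi
        have : m+1-1-i+1 = m+1-i := by omega
        rw [this])
    rw [hrefl, Finset.prod_range_succ, ← Up]
  have P2 : ∏ i ∈ range (m+1), ((X:ZX)^(m+1) + X^((m+1)+i) * 1) =
      X^((m+1)*(m+1)) * (Up m * 2) := by
    have hterm : ∀ i ∈ range (m+1), ((X:ZX)^(m+1) + X^((m+1)+i) * 1) =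
        X^(m+1) * (1 + X^i) := by
      intro i hi
      rw [mul_add, mul_one, mul_one, ← pow_add]
    rw [Finset.prod_congr rfl hterm, Finset.prod_mul_distrib,
      Finset.prod_const, ← pow_mul, Finset.prod_range_succ']
    rw [Finset.card_range]
    congr 1
    simp [Up]
    norm_num
  rw [P1, P2, pow_add]
  ring

lemma sumR (m : ℕ) :
    ∑ j ∈ range (2*(m+1)+1), c (2*(m+1)) j * ((X:ZX)^(m+1))^(2*(m+1)-j) * 1^j =
    X^(s (m+1) + (m+1)*(m+1)) *
      ((∑ k ∈ range (m+1),
        (bq (2*(m+1)) (m-k+1) + bq (2*(m+1)) (m+2+k)) * X^(s (k+1)))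
       + X^(s (m+2))) := by
  have hterm : ∀ j, c (2*(m+1)) j * ((X:ZX)^(m+1))^(2*(m+1)-j) * 1^j =
      bq (2*(m+1)) j * X^(s j + (m+1)*(2*(m+1)-j)) := by
    intro j
    rw [one_pow, mul_one, c, bq, ← pow_mul, pow_add]
    ring
  simp only [hterm]
  have hsplit : 2*(m+1)+1 = (m+2) + (m+1) := by ring
  rw [hsplit, Finset.sum_range_add]
  have S1 : ∑ j ∈ range (m+2), bq (2*(m+1)) j * (X:ZX)^(s j + (m+1)*(2*(m+1)-j)) =
      (∑ k ∈ range (m+1),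
        bq (2*(m+1)) (m-k+1) * X^(s (m+1) + (m+1)*(m+1) + s (k+1)))
      + X^(s (m+1) + (m+1)*(m+1) + s (m+2)) := by
    rw [← Finset.sum_range_reflect]
    rw [Finset.sum_range_succ]
    congr 1
    · refine Finset.sum_congr rfl (fun k hk => by
        have hk' := Finset.mem_range.mp hk
        have e1 : m+2-1-k = m-k+1 := by omega
        rw [e1]
        congr 2
        have e2 : 2*(m+1) - (m-k+1) = m+1+k := by omega
        rw [e2]
        exact expo1 (by omega))
    · have e1 : m+2-1-(m+1) = 0 := by omega
      rw [e1]
      have : bq (2*(m+1)) 0 = 1 := by simp [bq, Num, V]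
      rw [this, one_mul]
      congr 1
      have e2 : 2*(m+1) - 0 = 2*(m+1) := by omega
      rw [e2]
      have e3 : s 0 + (m+1)*(2*(m+1)) = (m+1)*(2*(m+1)) := by simp [s]
      rw [e3]
      exact expo3 m
  have S2 : ∑ k ∈ range (m+1),
      bq (2*(m+1)) (m+2+k) * (X:ZX)^(s (m+2+k) + (m+1)*(2*(m+1)-(m+2+k))) =
      ∑ k ∈ range (m+1),
        bq (2*(m+1)) (m+2+k) * X^(s (m+1) + (m+1)*(m+1) + s (k+1)) := by
    refine Finset.sum_congr rfl (fun k hk => by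
      have hk' := Finset.mem_range.mp hk
      congr 2
      have e2 : 2*(m+1) - (m+2+k) = m-k := by omega
      rw [e2]
      exact expo2 (by omega))
  rw [S1, S2]
  have key : ∀ (g h : ℕ → ZX) (e' : ℕ) (w : ℕ → ℕ) (z : ℕ),
      (X:ZX)^e' * ((∑ k ∈ range (m+1), (g k + h k) * X^(w k)) + X^z)
      = ((∑ k ∈ range (m+1), g k * X^(e' + w k)) + X^(e'+z))
        + ∑ k ∈ range (m+1), h k * X^(e'+w k) := by
    intro g h e' w z
    rw [mul_add, Finset.mul_sum, ← pow_add]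
    have : ∀ k ∈ range (m+1), (X:ZX)^e' * ((g k + h k) * X^(w k))
        = g k * X^(e' + w k) + h k * X^(e' + w k) := by
      intro k hk
      rw [pow_add]
      ring
    rw [Finset.sum_congr rfl this, Finset.sum_add_distrib]
    ring
  rw [key (fun k => bq (2*(m+1)) (m-k+1)) (fun k => bq (2*(m+1)) (m+2+k))
      (s (m+1) + (m+1)*(m+1)) (fun k => s (k+1)) (s (m+2))]

lemma R1 (m : ℕ) :
    2 * ((1 + (X:ZX)^(m+1)) * (Up m)^2) =
    (∑ k ∈ range (m+1),
      (bq (2*(m+1)) (m-k+1) + bq (2*(m+1)) (m+2+k)) * X^(s (k+1)))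
     + X^(s (m+2)) := by
  have hq := qbt ((X:ZX)^(m+1)) 1 (2*(m+1))
  rw [prodL, sumR] at hq
  exact mul_left_cancel₀ (pow_ne_zero _ PowerSeries.X_ne_zero) hq
-- Part 3 : coefficient extraction
def N1 (d : ℕ) (g : ZX) : Prop := ∀ t, t < d → coeff (R := ℤ) t g = if t = 0 then 1 else 0

lemma N1_sub {d m : ℕ} (h : d ≤ m) : N1 d (1 - X^m) := by
  intro t ht
  rw [map_sub, PowerSeries.coeff_one, PowerSeries.coeff_X_pow]
  have : ¬ (t = m) := by omega
  rw [if_neg this, sub_zero]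

lemma N1_mul {d : ℕ} {g h : ZX} (hg : N1 d g) (hh : N1 d h) : N1 d (g * h) := by
  intro t ht
  rw [PowerSeries.coeff_mul]
  have hcong : ∀ p ∈ Finset.HasAntidiagonal.antidiagonal t,
      coeff (R := ℤ) p.1 g * coeff (R := ℤ) p.2 h = if p = ((0:ℕ),(0:ℕ)) then 1 else 0 := by
    intro p hp
    have hp' := Finset.HasAntidiagonal.mem_antidiagonal.mp hp
    rw [hg p.1 (by omega), hh p.2 (by omega)]
    by_cases h1 : p.1 = 0 <;> by_cases h2 : p.2 = 0 <;>
      simp [h1, h2, Prod.ext_iff]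
  rw [Finset.sum_congr rfl hcong,
    Finset.sum_ite_eq' (Finset.HasAntidiagonal.antidiagonal t) ((0:ℕ),(0:ℕ)) (fun _ => (1:ℤ))]
  by_cases ht0 : t = 0 <;> simp [ht0, Finset.HasAntidiagonal.mem_antidiagonal, eq_comm]

lemma N1_prod {d r : ℕ} {g : ℕ → ZX} (h : ∀ i ∈ range r, N1 d (g i)) :
    N1 d (∏ i ∈ range r, g i) := by
  induction r with
  | zero => intro t ht; simp
  | succ r ih =>
    rw [Finset.prod_range_succ]
    exact N1_mul (ih (fun i hi => h i (by simp at hi ⊢; omega)))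
      (h r (by simp))

lemma coeff_N1_Xpow {d n a : ℕ} {h : ZX} (hh : N1 d h) (hbound : n < a + d) :
    coeff (R := ℤ) n (h * X^a) = if n = a then 1 else 0 := by
  rw [PowerSeries.coeff_mul_X_pow']
  by_cases hle : a ≤ n
  · rw [if_pos hle, hh (n-a) (by omega)]
    by_cases he : n = a
    · simp [he]
    · rw [if_neg (by omega), if_neg he]
  · rw [if_neg hle, if_neg (by omega)]

lemma U_bq {n j : ℕ} (hj : j ≤ n) :
    U n * bq n j = Num n j * ∏ i ∈ range (n-j), (1 - X^(j+i+1)) := by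
  have hU : U n = U j * ∏ i ∈ range (n-j), (1 - X^(j+i+1)) := by
    rw [U, U, show n = j + (n-j) by omega, Finset.prod_range_add]
    congr 1
    · rw [show j + (n-j) - j = n - j by omega]
  rw [hU, bq]
  calc U j * (∏ i ∈ range (n-j), (1 - X^(j+i+1))) * (Num n j * V j)
      = (U j * V j) * (Num n j * ∏ i ∈ range (n-j), (1 - X^(j+i+1))) := by ring
    _ = _ := by rw [UV, one_mul]

lemma N1_U_bq1 {m k : ℕ} (hk : k ≤ m) :
    N1 (m+1-k) (U (2*(m+1)) * bq (2*(m+1)) (m-k+1)) := by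
  rw [U_bq (by omega), Num]
  refine N1_mul ?_ ?_
  · refine N1_prod (fun i hi => ?_)
    have hi' := Finset.mem_range.mp hi
    exact N1_sub (by omega)
  · exact N1_prod (fun i hi => N1_sub (by omega))

lemma N1_U_bq2 {m k : ℕ} (hk : k ≤ m) :
    N1 (m+1-k) (U (2*(m+1)) * bq (2*(m+1)) (m+2+k)) := by
  rw [U_bq (by omega), Num]
  refine N1_mul ?_ ?_
  · refine N1_prod (fun i hi => ?_)
    have hi' := Finset.mem_range.mp hi
    exact N1_sub (by omega)
  · exact N1_prod (fun i hi => N1_sub (by omega))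
open Classical in
lemma R2 {n m : ℕ} (hn : n ≤ m) :
    coeff (R := ℤ) n ((1 + X^(m+1)) * (Up m)^2 * U (2*(m+1))) =
    if (∃ j : ℕ, n = s (j+1)) then 1 else 0 := by
  have hR := congrArg (fun F => coeff (R := ℤ) n (F * U (2*(m+1)))) (R1 m)
  -- LHS of hR
  have hL : coeff (R := ℤ) n (2 * ((1 + X^(m+1)) * (Up m)^2) * U (2*(m+1)))
      = 2 * coeff (R := ℤ) n ((1 + X^(m+1)) * (Up m)^2 * U (2*(m+1))) := by
    have : 2 * ((1 + (X:ZX)^(m+1)) * (Up m)^2) * U (2*(m+1))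
        = ((1 + X^(m+1)) * (Up m)^2 * U (2*(m+1)))
          + ((1 + X^(m+1)) * (Up m)^2 * U (2*(m+1))) := by ring
    rw [this, map_add]; ring
  -- RHS of hR
  have hRR : coeff (R := ℤ) n
      (((∑ k ∈ range (m+1),
          (bq (2*(m+1)) (m-k+1) + bq (2*(m+1)) (m+2+k)) * X^(s (k+1)))
        + X^(s (m+2))) * U (2*(m+1)))
      = 2 * ∑ k ∈ range (m+1), (if n = s (k+1) then (1:ℤ) else 0) := by
    rw [add_mul, Finset.sum_mul, map_add, map_sum]
    have hterm : ∀ k ∈ range (m+1),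
        coeff (R := ℤ) n ((bq (2*(m+1)) (m-k+1) + bq (2*(m+1)) (m+2+k)) * X^(s (k+1))
          * U (2*(m+1)))
        = 2 * (if n = s (k+1) then (1:ℤ) else 0) := by
      intro k hk
      have hk' := Finset.mem_range.mp hk
      have hrearr : (bq (2*(m+1)) (m-k+1) + bq (2*(m+1)) (m+2+k)) * X^(s (k+1))
          * U (2*(m+1))
          = (U (2*(m+1)) * bq (2*(m+1)) (m-k+1)) * X^(s (k+1))
            + (U (2*(m+1)) * bq (2*(m+1)) (m+2+k)) * X^(s (k+1)) := by ring
      have hbound : n < s (k+1) + (m+1-k) := by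
        have := le_s k
        omega
      rw [hrearr, map_add,
        coeff_N1_Xpow (N1_U_bq1 (by omega)) hbound,
        coeff_N1_Xpow (N1_U_bq2 (by omega)) hbound]
      ring
    rw [Finset.sum_congr rfl hterm]
    have hlast : coeff (R := ℤ) n ((X:ZX)^(s (m+2)) * U (2*(m+1))) = 0 := by
      rw [mul_comm, PowerSeries.coeff_mul_X_pow']
      have hle := le_s (m+1)
      rw [show m+1+1 = m+2 from rfl] at hle
      rw [if_neg (by omega)]
    rw [hlast, add_zero, Finset.mul_sum]
  rw [hL, hRR] at hR
  have hcancel := mul_left_cancel₀ (by norm_num : (2:ℤ) ≠ 0) hR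
  rw [hcancel]
  by_cases hex : ∃ j : ℕ, n = s (j+1)
  · obtain ⟨j, hj⟩ := hex
    have hjm : j < m+1 := by
      have := le_s j
      omega
    rw [if_pos ⟨j, hj⟩]
    rw [Finset.sum_eq_single_of_mem j (Finset.mem_range.mpr hjm)]
    · rw [if_pos hj]
    · intro b _ hbj
      rw [if_neg]
      intro hb
      rcases Nat.lt_or_ge b j with h' | h'
      · exact absurd (hb ▸ hj ▸ s_strictMono h') (by omega)
      · have : j < b := by omega
        exact absurd (hj ▸ hb ▸ s_strictMono this) (by omega)
  · rw [if_neg hex]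
    exact Finset.sum_eq_zero (fun k hk => by
      rw [if_neg (fun hc => hex ⟨k, hc⟩)])
-- Part 4: low-order coefficient equality machinery
section LowEq
variable {R : Type*} [CommRing R]

def lowEq (N : ℕ) (F G : PowerSeries R) : Prop :=
  ∀ n, n ≤ N → PowerSeries.coeff (R := R) n F = PowerSeries.coeff (R := R) n G

lemma lowEq_refl {N : ℕ} (F : PowerSeries R) : lowEq N F F := fun _ _ => rfl

lemma lowEq_of_eq {N : ℕ} {F G : PowerSeries R} (h : F = G) : lowEq N F G := by
  intro n hn; rw [h]

lemma lowEq_trans {N : ℕ} {F G H : PowerSeries R} (h1 : lowEq N F G)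
    (h2 : lowEq N G H) : lowEq N F H := fun n hn => (h1 n hn).trans (h2 n hn)

lemma lowEq_symm {N : ℕ} {F G : PowerSeries R} (h : lowEq N F G) : lowEq N G F :=
  fun n hn => (h n hn).symm

lemma lowEq_mul {N : ℕ} {F F' G G' : PowerSeries R} (h1 : lowEq N F F')
    (h2 : lowEq N G G') : lowEq N (F * G) (F' * G') := by
  intro n hn
  rw [PowerSeries.coeff_mul, PowerSeries.coeff_mul]
  refine Finset.sum_congr rfl (fun p hp => ?_)
  have hp' := Finset.HasAntidiagonal.mem_antidiagonal.mp hp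
  rw [h1 p.1 (by omega), h2 p.2 (by omega)]

lemma lowEq_pow {N k : ℕ} {F F' : PowerSeries R} (h : lowEq N F F') :
    lowEq N (F^k) (F'^k) := by
  induction k with
  | zero => simpa using lowEq_refl _
  | succ k ih => rw [pow_succ, pow_succ]; exact lowEq_mul ih h

lemma lowEq_sub_one {N m : ℕ} (h : N < m) :
    lowEq N ((1 : PowerSeries R) - PowerSeries.X^m) 1 := by
  intro n hn
  rw [map_sub, PowerSeries.coeff_X_pow, if_neg (by omega), sub_zero]

lemma lowEq_add_one {N m : ℕ} (h : N < m) :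
    lowEq N ((1 : PowerSeries R) + PowerSeries.X^m) 1 := by
  intro n hn
  rw [map_add, PowerSeries.coeff_X_pow, if_neg (by omega), add_zero]

lemma lowEq_prod_one {N r : ℕ} {g : ℕ → PowerSeries R}
    (h : ∀ i ∈ range r, lowEq N (g i) 1) :
    lowEq N (∏ i ∈ range r, g i) 1 := by
  induction r with
  | zero => simp [lowEq_refl]
  | succ r ih =>
    rw [Finset.prod_range_succ]
    have := lowEq_mul (ih (fun i hi => h i (by simp at hi ⊢; omega)))
      (h r (by simp))
    simpa using this

lemma lowEq_prod_drop {N M1 M2 : ℕ} {g : ℕ → PowerSeries R} (hM : M1 ≤ M2)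
    (h : ∀ i, M1 ≤ i → i < M2 → lowEq N (g i) 1) :
    lowEq N (∏ i ∈ range M2, g i) (∏ i ∈ range M1, g i) := by
  rw [show M2 = M1 + (M2 - M1) by omega, Finset.prod_range_add]
  have htail : lowEq N (∏ i ∈ range (M2-M1), g (M1+i)) 1 :=
    lowEq_prod_one (fun i hi => h (M1+i) (by omega)
      (by have := Finset.mem_range.mp hi; omega))
  have := lowEq_mul (lowEq_refl (R := R) (∏ i ∈ range M1, g i)) htail
  simpa using this

end LowEq

-- stability of f 1
lemma lowEq_f_one (N M : ℕ) (h : N < M) : lowEq N (f 1) (U M) := by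
  intro n hn
  rw [f, PowerSeries.coeff_mk]
  have h1 : (∏ i ∈ Finset.range (n+1), (1 - (X:ZX)^(1*(i+1)))) = U (n+1) := by
    rw [U]
    exact Finset.prod_congr rfl (fun i _ => by rw [one_mul])
  rw [h1]
  exact (lowEq_prod_drop (show n+1 ≤ M by omega)
    (fun i hi1 hi2 => lowEq_sub_one (by omega)) n le_rfl).symm

-- char 2 facts
local notation "S2" => PowerSeries (ZMod 2)

lemma two_eq_zero_S2 : (2 : S2) = 0 := by
  have h1 : (2 : S2) = PowerSeries.C (R := ZMod 2) 2 := (map_ofNat _ 2).symm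
  have h2 : (2 : ZMod 2) = 0 := rfl
  rw [h1, h2, map_zero]

lemma sq_one_sub (m : ℕ) : ((1 : S2) - X^m)^2 = 1 - X^(2*m) := by
  have hexp : (X:S2)^(2*m) = X^m * X^m := by rw [two_mul, pow_add]
  have hd : ((1 : S2) - X^m)^2 - (1 - X^(2*m)) = 2 * (X^(2*m) - X^m) := by
    rw [hexp]; ring
  rw [two_eq_zero_S2, zero_mul] at hd
  exact sub_eq_zero.mp hd
lemma one_add_eq_one_sub (k : ℕ) : ((1:S2) + X^k) = 1 - X^k := by
  linear_combination (X:S2)^k * two_eq_zero_S2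

open Classical in
lemma key (N : ℕ) :
    ((PowerSeries.coeff (R := ℤ) N ((f 1)^3) : ℤ) : ZMod 2) =
    if (∃ j : ℕ, N = s (j+1)) then 1 else 0 := by
  have st1 : PowerSeries.coeff (R := ℤ) N ((f 1)^3) =
      PowerSeries.coeff (R := ℤ) N ((U (2*(N+1)))^3) :=
    lowEq_pow (lowEq_f_one N (2*(N+1)) (by omega)) N le_rfl
  rw [st1]
  have st2 : ((PowerSeries.coeff (R := ℤ) N ((U (2*(N+1)))^3) : ℤ) : ZMod 2)
      = PowerSeries.coeff (R := ZMod 2) N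
          (PowerSeries.map (Int.castRingHom (ZMod 2)) ((U (2*(N+1)))^3)) := by
    rw [PowerSeries.coeff_map]; rfl
  rw [st2, map_pow]
  have hπU : PowerSeries.map (Int.castRingHom (ZMod 2)) (U (2*(N+1)))
      = ∏ i ∈ range (2*(N+1)), ((1:S2) - X^(i+1)) := by
    rw [U, map_prod]
    exact Finset.prod_congr rfl (fun i _ => by
      rw [map_sub, map_one, map_pow, PowerSeries.map_X])
  have hπUp : PowerSeries.map (Int.castRingHom (ZMod 2)) (Up N)
      = ∏ i ∈ range N, ((1:S2) - X^(i+1)) := by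
    rw [Up, map_prod]
    refine Finset.prod_congr rfl (fun i _ => by
      rw [map_add, map_one, map_pow, PowerSeries.map_X, one_add_eq_one_sub])
  have sq1 : (PowerSeries.map (Int.castRingHom (ZMod 2)) (U (2*(N+1))))^2
      = ∏ i ∈ range (2*(N+1)), ((1:S2) - X^(2*(i+1))) := by
    rw [hπU, ← Finset.prod_pow]
    exact Finset.prod_congr rfl (fun i _ => sq_one_sub (i+1))
  have sq2 : (PowerSeries.map (Int.castRingHom (ZMod 2)) (Up N))^2
      = ∏ i ∈ range N, ((1:S2) - X^(2*(i+1))) := by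
    rw [hπUp, ← Finset.prod_pow]
    exact Finset.prod_congr rfl (fun i _ => sq_one_sub (i+1))
  have main2 : lowEq N ((PowerSeries.map (Int.castRingHom (ZMod 2)) (U (2*(N+1))))^3)
      (PowerSeries.map (Int.castRingHom (ZMod 2))
        ((1 + X^(N+1)) * (Up N)^2 * U (2*(N+1)))) := by
    have hrhs : PowerSeries.map (Int.castRingHom (ZMod 2))
        ((1 + X^(N+1)) * (Up N)^2 * U (2*(N+1)))
        = (((1:S2) + X^(N+1)) * (PowerSeries.map (Int.castRingHom (ZMod 2)) (Up N))^2)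
          * PowerSeries.map (Int.castRingHom (ZMod 2)) (U (2*(N+1))) := by
      rw [map_mul, map_mul, map_pow, map_add, map_one, map_pow, PowerSeries.map_X]
    rw [hrhs, pow_succ]
    refine lowEq_mul ?_ (lowEq_refl _)
    rw [sq1, sq2]
    refine lowEq_trans (lowEq_prod_drop (show N ≤ 2*(N+1) by omega)
        (fun i h1 h2 => lowEq_sub_one (by omega))) ?_
    refine lowEq_symm ?_
    have := lowEq_mul (lowEq_add_one (show N < N+1 by omega))
      (lowEq_refl (∏ i ∈ range N, ((1:S2) - X^(2*(i+1)))))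
    simpa using this
  rw [main2 N le_rfl, PowerSeries.coeff_map, R2 (le_refl N)]
  split_ifs <;> simp

end

end CubeAux

/-- The coefficient of `q^N` in `(∏_{i≥1}(1-q^i))^3` is odd iff `N` is triangular. -/
theorem cube_triangular_mod_two (N : ℕ) :
    Odd (PowerSeries.coeff (R := ℤ) N ((f 1) ^ 3)) ↔ ∃ n : ℕ, 2 * N = n * (n + 1) := by
  have hkey := CubeAux.key N
  have hodd : Odd (PowerSeries.coeff (R := ℤ) N ((f 1)^3)) ↔
      ((PowerSeries.coeff (R := ℤ) N ((f 1)^3) : ℤ) : ZMod 2) = 1 := by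
    rw [← Int.not_even_iff_odd, even_iff_two_dvd,
      show ((2:ℤ)) = ((2:ℕ):ℤ) by norm_num,
      ← ZMod.intCast_zmod_eq_zero_iff_dvd]
    generalize ((PowerSeries.coeff (R := ℤ) N ((f 1)^3) : ℤ) : ZMod 2) = a
    revert a
    decide
  rw [hodd, hkey]
  by_cases hex : ∃ j : ℕ, N = CubeAux.s (j+1)
  · rw [if_pos hex]
    simp only [eq_self_iff_true, true_iff]
    obtain ⟨j, hj⟩ := hex
    refine ⟨j, ?_⟩
    have h2 := CubeAux.two_s j
    have hc : (j+1)*j = j*(j+1) := Nat.mul_comm _ _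
    omega
  · rw [if_neg hex]
    constructor
    · intro h; exact absurd h (by decide)
    · rintro ⟨n0, hn0⟩
      exfalso
      apply hex
      refine ⟨n0, ?_⟩
      have h2 := CubeAux.two_s n0
      have hc : (n0+1)*n0 = n0*(n0+1) := Nat.mul_comm _ _
      omega
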